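/- With h = g ∘ ρ^{-1} as above, there exists a unique r_c ∈ (0, 2/π) such that h'' > 0 on (0, r_c), h''(r_c) = 0, and h'' < 0 on (r_c, 1). Specifically, h''(r) = 2(φ sin φ + cos φ)/(φ² ρ'(φ)) with φ = ρ^{-1}(r), and there is a unique φ_c ∈ (π/2, π) with φ_c sin φ_c + cos φ_c = 0; moreover φ sin φ + cos φ > 0 if and only if 0 < φ < φ_c, and r_c = ρ(φ_c) (note ρ' < 0 on (0,π)). -/

import Mathlib

open scoped Real

noncomputable section

/-- The function `g(φ) = (2φ - sin 2φ)/(2φ²)`, `g(0) = 0`. -/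
def gProf (φ : ℝ) : ℝ := if φ = 0 then 0 else (2 * φ - Real.sin (2 * φ)) / (2 * φ ^ 2)

/-- The function `ρ(φ) = sin φ / φ`, `ρ(0) = 1`. -/
def rhoProf (φ : ℝ) : ℝ := if φ = 0 then 1 else Real.sin φ / φ

/-- The inverse `ρ⁻¹ : [0,1] → [0,π]` of `ρ` on `[0,π]`. -/
def rhoInv : ℝ → ℝ := Function.invFunOn rhoProf (Set.Icc 0 π)

/-- The profile function `h = g ∘ ρ⁻¹` of the unit Carnot–Carathéodory ball:
`B̄(0,1) = {[z,t] : ‖z‖ ≤ 1, |t| ≤ h(‖z‖)}`. -/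
def hProf : ℝ → ℝ := fun r => gProf (rhoInv r)


/-- The second derivative `h''` of the profile function (derivatives taken within
`[0,1]`). -/
def hProf'' : ℝ → ℝ := derivWithin (derivWithin hProf (Set.Icc 0 1)) (Set.Icc 0 1)

open Set Filter Function Real Topology

lemma hasDerivAt_rho {φ : ℝ} (hφ : φ ≠ 0) :
    HasDerivAt rhoProf ((φ * Real.cos φ - Real.sin φ) / φ ^ 2) φ := by
  have h : HasDerivAt (fun y : ℝ => Real.sin y / y)
      ((Real.cos φ * φ - Real.sin φ * 1) / φ ^ 2) φ :=
    (Real.hasDerivAt_sin φ).div (hasDerivAt_id φ) hφ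
  have h2 : HasDerivAt (fun y : ℝ => Real.sin y / y)
      ((φ * Real.cos φ - Real.sin φ) / φ ^ 2) φ := by
    convert h using 1; ring
  apply h2.congr_of_eventuallyEq
  filter_upwards [isOpen_ne.mem_nhds hφ] with y hy
  simp [rhoProf, hy]

lemma continuousOn_rho : ContinuousOn rhoProf (Set.Icc 0 π) := by
  intro x hx
  rcases eq_or_ne x 0 with rfl | hx0
  · have h1 : Filter.Tendsto (slope Real.sin 0) (𝓝[≠] (0:ℝ)) (𝓝 1) := by
      have := Real.hasDerivAt_sin 0
      rw [hasDerivAt_iff_tendsto_slope] at this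
      simpa using this
    have h2 : Filter.Tendsto rhoProf (𝓝[≠] (0:ℝ)) (𝓝 1) := by
      apply h1.congr'
      filter_upwards [self_mem_nhdsWithin] with y hy
      have hy' : y ≠ 0 := hy
      simp [slope_def_field, rhoProf, hy', div_eq_mul_inv]
    have h3 : Filter.Tendsto rhoProf (𝓝 (0:ℝ)) (𝓝 1) := by
      rw [← nhdsNE_sup_pure, Filter.tendsto_sup]
      refine ⟨h2, ?_⟩
      have : rhoProf 0 = 1 := by simp [rhoProf]
      simpa [this] using tendsto_pure_nhds rhoProf (0:ℝ)
    have h4 : ContinuousAt rhoProf 0 := by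
      have : rhoProf 0 = 1 := by simp [rhoProf]
      rw [ContinuousAt, this]; exact h3
    exact h4.continuousWithinAt
  · exact ((hasDerivAt_rho hx0).continuousAt).continuousWithinAt

lemma sin_sub_mul_cos_pos {φ : ℝ} (h0 : 0 < φ) (hπ : φ ≤ π) :
    φ * Real.cos φ < Real.sin φ := by
  have key : StrictMonoOn (fun y : ℝ => Real.sin y - y * Real.cos y) (Set.Icc 0 π) := by
    apply strictMonoOn_of_deriv_pos (convex_Icc 0 π)
    · fun_prop
    · intro x hx
      rw [interior_Icc] at hx
      have hd : HasDerivAt (fun y : ℝ => Real.sin y - y * Real.cos y)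
          (x * Real.sin x) x := by
        have := (Real.hasDerivAt_sin x).sub
          (((hasDerivAt_id x).mul (Real.hasDerivAt_cos x)))
        simp only [id_eq] at this
        exact this.congr_deriv (by ring)
      rw [hd.deriv]
      exact mul_pos hx.1 (Real.sin_pos_of_pos_of_lt_pi hx.1 hx.2)
  have := key (Set.left_mem_Icc.2 Real.pi_pos.le) ⟨h0.le, hπ⟩ h0
  simp only [Real.sin_zero, Real.cos_zero, mul_one, sub_zero, zero_mul, sub_self] at this ⊢
  linarith

lemma rhoDeriv_neg {φ : ℝ} (h0 : 0 < φ) (hπ : φ ≤ π) :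
    (φ * Real.cos φ - Real.sin φ) / φ ^ 2 < 0 :=
  div_neg_of_neg_of_pos (by linarith [sin_sub_mul_cos_pos h0 hπ]) (by positivity)

lemma strictAntiOn_rho : StrictAntiOn rhoProf (Set.Icc 0 π) := by
  apply strictAntiOn_of_deriv_neg (convex_Icc 0 π) continuousOn_rho
  intro x hx
  rw [interior_Icc] at hx
  rw [(hasDerivAt_rho (ne_of_gt hx.1)).deriv]
  exact rhoDeriv_neg hx.1 hx.2.le

lemma rho_zero : rhoProf 0 = 1 := by simp [rhoProf]

lemma rho_pi : rhoProf π = 0 := by simp [rhoProf, Real.pi_ne_zero]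

lemma rho_surj : Set.Icc (0:ℝ) 1 ⊆ rhoProf '' Set.Icc 0 π := by
  have := intermediate_value_Icc' Real.pi_pos.le continuousOn_rho
  rwa [rho_zero, rho_pi] at this


lemma rhoInv_rho {φ : ℝ} (hφ : φ ∈ Set.Icc 0 π) : rhoInv (rhoProf φ) = φ :=
  strictAntiOn_rho.injOn.leftInvOn_invFunOn hφ

lemma rhoInv_mem {r : ℝ} (hr : r ∈ Set.Icc (0:ℝ) 1) : rhoInv r ∈ Set.Icc 0 π := by
  obtain ⟨φ, hφ, hφr⟩ := rho_surj hr
  exact Function.invFunOn_mem ⟨φ, hφ, hφr⟩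

lemma rho_rhoInv {r : ℝ} (hr : r ∈ Set.Icc (0:ℝ) 1) : rhoProf (rhoInv r) = r := by
  obtain ⟨φ, hφ, hφr⟩ := rho_surj hr
  exact Function.invFunOn_eq ⟨φ, hφ, hφr⟩

lemma rhoInv_zero : rhoInv 0 = π := by
  have := rhoInv_rho (Set.right_mem_Icc.2 Real.pi_pos.le)
  rwa [rho_pi] at this

lemma rhoInv_one : rhoInv 1 = 0 := by
  have := rhoInv_rho (Set.left_mem_Icc.2 Real.pi_pos.le)
  rwa [rho_zero] at this

lemma rhoInv_mem_Ioo {r : ℝ} (hr : r ∈ Set.Ioo (0:ℝ) 1) : rhoInv r ∈ Set.Ioo 0 π := by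
  have h1 := rhoInv_mem (Set.mem_Icc_of_Ioo hr)
  rcases h1.1.lt_or_eq with h | h
  · rcases h1.2.lt_or_eq with h' | h'
    · exact ⟨h, h'⟩
    · exfalso
      have := rho_rhoInv (Set.mem_Icc_of_Ioo hr)
      rw [h', rho_pi] at this
      exact absurd this.symm (ne_of_gt hr.1)
  · exfalso
    have := rho_rhoInv (Set.mem_Icc_of_Ioo hr)
    rw [← h, rho_zero] at this
    exact absurd this.symm (ne_of_lt hr.2)

lemma strictAntiOn_rhoInv : StrictAntiOn rhoInv (Set.Icc 0 1) := by
  intro r1 h1 r2 h2 h12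
  by_contra hle
  push_neg at hle
  have := strictAntiOn_rho.antitoneOn (rhoInv_mem h1) (rhoInv_mem h2) hle
  rw [rho_rhoInv h1, rho_rhoInv h2] at this
  exact absurd h12 (not_lt.2 this)

lemma image_rhoInv : rhoInv '' Set.Icc 0 1 = Set.Icc 0 π := by
  apply Set.Subset.antisymm
  · rintro _ ⟨r, hr, rfl⟩; exact rhoInv_mem hr
  · intro φ hφ
    refine ⟨rhoProf φ, ?_, rhoInv_rho hφ⟩
    constructor
    · rw [← rho_pi]; exact strictAntiOn_rho.antitoneOn hφ (Set.right_mem_Icc.2 Real.pi_pos.le) hφ.2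
    · rw [← rho_zero]; exact strictAntiOn_rho.antitoneOn (Set.left_mem_Icc.2 Real.pi_pos.le) hφ hφ.1

lemma strictMonoOn_negRhoInv : StrictMonoOn (fun r => -(rhoInv r)) (Set.Icc (0:ℝ) 1) := by
  intro a ha b hb hab
  simpa using strictAntiOn_rhoInv ha hb hab

lemma image_negRhoInv : (fun r => -(rhoInv r)) '' Set.Icc (0:ℝ) 1 = Set.Icc (-π) 0 := by
  have : (fun r => -(rhoInv r)) = (fun x : ℝ => -x) ∘ rhoInv := rfl
  rw [this, Set.image_comp, image_rhoInv]
  ext x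
  simp only [Set.mem_image, Set.mem_Icc]
  constructor
  · rintro ⟨y, hy, rfl⟩; exact ⟨by linarith [hy.2], by linarith [hy.1]⟩
  · intro hx; exact ⟨-x, ⟨by linarith [hx.2], by linarith [hx.1]⟩, by ring⟩

lemma continuousAt_rhoInv {r : ℝ} (hr : r ∈ Set.Ioo (0:ℝ) 1) : ContinuousAt rhoInv r := by
  have hm := rhoInv_mem_Ioo hr
  have h : ContinuousAt (fun r => -(rhoInv r)) r := by
    apply strictMonoOn_negRhoInv.continuousAt_of_image_mem_nhds
    · exact Icc_mem_nhds hr.1 hr.2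
    · rw [image_negRhoInv]
      exact Icc_mem_nhds (by linarith [hm.2]) (by linarith [hm.1])
  have := h.neg
  simpa only [Pi.neg_def, neg_neg] using this

lemma continuousWithinAt_rhoInv_zero : ContinuousWithinAt rhoInv (Set.Ici 0) 0 := by
  have h : ContinuousWithinAt (fun r => -(rhoInv r)) (Set.Ici 0) 0 := by
    apply strictMonoOn_negRhoInv.continuousWithinAt_right_of_image_mem_nhdsWithin
    · exact Filter.inter_mem self_mem_nhdsWithin
        (mem_nhdsWithin_of_mem_nhds (Iic_mem_nhds one_pos))
    · rw [image_negRhoInv, show -(rhoInv 0) = -π by rw [rhoInv_zero]]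
      rw [show Set.Icc (-π) (0:ℝ) = Set.Ici (-π) ∩ Set.Iic 0 from (Set.Ici_inter_Iic).symm]
      exact Filter.inter_mem self_mem_nhdsWithin
        (mem_nhdsWithin_of_mem_nhds (Iic_mem_nhds (by linarith [Real.pi_pos])))
  have := h.neg
  simpa only [Pi.neg_def, neg_neg] using this


lemma hasDerivAt_g {φ : ℝ} (hφ : φ ≠ 0) :
    HasDerivAt gProf
      ((-2 * Real.cos φ / φ) * ((φ * Real.cos φ - Real.sin φ) / φ ^ 2)) φ := by
  have hnum : HasDerivAt (fun y : ℝ => 2 * y - Real.sin (2 * y))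
      (2 - Real.cos (2 * φ) * 2) φ := by
    have h1 : HasDerivAt (fun y : ℝ => 2 * y) 2 φ := by
      simpa using (hasDerivAt_id φ).const_mul 2
    have h2 : HasDerivAt (fun y : ℝ => Real.sin (2 * y)) (Real.cos (2 * φ) * 2) φ :=
      (Real.hasDerivAt_sin (2 * φ)).comp φ h1
    exact h1.sub h2
  have hden : HasDerivAt (fun y : ℝ => 2 * y ^ 2) (4 * φ) φ := by
    have := (hasDerivAt_pow 2 φ).const_mul 2
    refine this.congr_deriv ?_
    simp; ring
  have hdiv := hnum.div hden (by positivity)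
  have heq : HasDerivAt (fun y : ℝ => (2 * y - Real.sin (2 * y)) / (2 * y ^ 2))
      ((-2 * Real.cos φ / φ) * ((φ * Real.cos φ - Real.sin φ) / φ ^ 2)) φ := by
    refine hdiv.congr_deriv (Eq.symm ?_)
    rw [Real.cos_two_mul, Real.sin_two_mul]
    field_simp
    ring_nf
  apply heq.congr_of_eventuallyEq
  filter_upwards [isOpen_ne.mem_nhds hφ] with y hy
  simp [gProf, hy]



lemma hasDerivAt_rhoInv {r : ℝ} (hr : r ∈ Set.Ioo (0:ℝ) 1) :
    HasDerivAt rhoInv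
      (((rhoInv r * Real.cos (rhoInv r) - Real.sin (rhoInv r)) / (rhoInv r) ^ 2)⁻¹) r := by
  have hm := rhoInv_mem_Ioo hr
  have hrho : HasDerivAt rhoProf
      ((rhoInv r * Real.cos (rhoInv r) - Real.sin (rhoInv r)) / (rhoInv r) ^ 2) (rhoInv r) := by
    have h := hasDerivAt_rho (ne_of_gt hm.1)
    have : rhoProf (rhoInv r) = r := rho_rhoInv (Set.mem_Icc_of_Ioo hr)
    simpa [this] using h
  apply HasDerivAt.of_local_left_inverse (continuousAt_rhoInv hr) hrho
    (ne_of_lt (rhoDeriv_neg hm.1 hm.2.le))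
  filter_upwards [Ioo_mem_nhds hr.1 hr.2] with y hy
  exact rho_rhoInv (Set.mem_Icc_of_Ioo hy)

lemma hasDerivAt_hProf {r : ℝ} (hr : r ∈ Set.Ioo (0:ℝ) 1) :
    HasDerivAt hProf (-2 * Real.cos (rhoInv r) / rhoInv r) r := by
  have hm := rhoInv_mem_Ioo hr
  have hd := (hasDerivAt_g (ne_of_gt hm.1)).comp r (hasDerivAt_rhoInv hr)
  have hne : (rhoInv r * Real.cos (rhoInv r) - Real.sin (rhoInv r)) / (rhoInv r) ^ 2 ≠ 0 :=
    ne_of_lt (rhoDeriv_neg hm.1 hm.2.le)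
  have : (-2 * Real.cos (rhoInv r) / rhoInv r) *
      ((rhoInv r * Real.cos (rhoInv r) - Real.sin (rhoInv r)) / (rhoInv r) ^ 2) *
      ((rhoInv r * Real.cos (rhoInv r) - Real.sin (rhoInv r)) / (rhoInv r) ^ 2)⁻¹
      = -2 * Real.cos (rhoInv r) / rhoInv r := by
    rw [mul_assoc, mul_inv_cancel₀ hne, mul_one]
  rw [← this]
  exact hd

lemma hasDerivAt_H {r : ℝ} (hr : r ∈ Set.Ioo (0:ℝ) 1) :
    HasDerivAt (fun y => -2 * Real.cos (rhoInv y) / rhoInv y)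
      (2 * (rhoInv r * Real.sin (rhoInv r) + Real.cos (rhoInv r)) / (rhoInv r) ^ 2 *
        ((rhoInv r * Real.cos (rhoInv r) - Real.sin (rhoInv r)) / (rhoInv r) ^ 2)⁻¹) r := by
  have hm := rhoInv_mem_Ioo hr
  have hφ : rhoInv r ≠ 0 := ne_of_gt hm.1
  have hin : HasDerivAt (fun φ : ℝ => -2 * Real.cos φ / φ)
      (2 * (rhoInv r * Real.sin (rhoInv r) + Real.cos (rhoInv r)) / (rhoInv r) ^ 2)
      (rhoInv r) := by
    have h1 : HasDerivAt (fun φ : ℝ => -2 * Real.cos φ) (-2 * -Real.sin (rhoInv r)) (rhoInv r) :=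
      (Real.hasDerivAt_cos (rhoInv r)).const_mul (-2)
    have := h1.div (hasDerivAt_id (rhoInv r)) hφ
    refine this.congr_deriv (Eq.symm ?_)
    simp only [id_eq]; field_simp
    ring
  exact hin.comp r (hasDerivAt_rhoInv hr)

lemma tendsto_rhoInv_zero : Filter.Tendsto rhoInv (𝓝[>] (0:ℝ)) (𝓝 π) := by
  have h := continuousWithinAt_rhoInv_zero
  rw [ContinuousWithinAt, rhoInv_zero] at h
  exact h.mono_left (nhdsWithin_mono 0 Set.Ioi_subset_Ici_self)

lemma continuousAt_negCosDiv : ContinuousAt (fun φ : ℝ => -2 * Real.cos φ / φ) π := by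
  exact ContinuousAt.div (by fun_prop) (by fun_prop) Real.pi_ne_zero

lemma hasDerivWithinAt_hProf_zero : HasDerivWithinAt hProf (2 / π) (Set.Icc 0 1) 0 := by
  have h : HasDerivWithinAt hProf (2 / π) (Set.Ici 0) 0 := by
    apply hasDerivWithinAt_Ici_of_tendsto_deriv (s := Set.Ioo 0 1)
    · intro r hr
      exact (hasDerivAt_hProf hr).differentiableAt.differentiableWithinAt
    · have hg : ContinuousAt gProf π := (hasDerivAt_g Real.pi_ne_zero).continuousAt
      have hri : ContinuousWithinAt rhoInv (Set.Ioo 0 1) 0 :=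
        continuousWithinAt_rhoInv_zero.mono (fun x hx => hx.1.le)
      have : ContinuousWithinAt hProf (Set.Ioo 0 1) 0 := by
        apply ContinuousAt.comp_continuousWithinAt _ hri
        rw [rhoInv_zero]; exact hg
      exact this
    · exact Ioo_mem_nhdsGT_of_mem (Set.mem_Ico.2 ⟨le_refl (0:ℝ), one_pos⟩)
    · have heq : ∀ᶠ r in 𝓝[>] (0:ℝ), deriv hProf r = -2 * Real.cos (rhoInv r) / rhoInv r := by
        filter_upwards [Ioo_mem_nhdsGT_of_mem (Set.mem_Ico.2 ⟨le_refl (0:ℝ), one_pos⟩)]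
          with r hr
        exact (hasDerivAt_hProf hr).deriv
      rw [Filter.tendsto_congr' heq]
      have h2 : Filter.Tendsto (fun r => -2 * Real.cos (rhoInv r) / rhoInv r) (𝓝[>] (0:ℝ))
          (𝓝 (-2 * Real.cos π / π)) :=
        (continuousAt_negCosDiv.tendsto).comp tendsto_rhoInv_zero
      simpa [Real.cos_pi] using h2
  exact h.mono Set.Icc_subset_Ici_self

lemma derivWithin_hProf_eq {r : ℝ} (hr : r ∈ Set.Ico (0:ℝ) 1) :
    derivWithin hProf (Set.Icc 0 1) r = -2 * Real.cos (rhoInv r) / rhoInv r := by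
  rcases eq_or_ne r 0 with rfl | hr0
  · rw [HasDerivWithinAt.derivWithin hasDerivWithinAt_hProf_zero
      ((uniqueDiffOn_Icc one_pos) 0 ⟨le_refl 0, zero_le_one⟩)]
    rw [rhoInv_zero, Real.cos_pi]
    ring
  · have hr' : r ∈ Set.Ioo (0:ℝ) 1 := ⟨lt_of_le_of_ne hr.1 (Ne.symm hr0), hr.2⟩
    rw [derivWithin_of_mem_nhds (Icc_mem_nhds hr'.1 (by linarith [hr'.2]))]
    exact (hasDerivAt_hProf hr').deriv

lemma hProf''_eq_Ioo {r : ℝ} (hr : r ∈ Set.Ioo (0:ℝ) 1) :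
    hProf'' r = 2 * (rhoInv r * Real.sin (rhoInv r) + Real.cos (rhoInv r)) / (rhoInv r) ^ 2 *
      ((rhoInv r * Real.cos (rhoInv r) - Real.sin (rhoInv r)) / (rhoInv r) ^ 2)⁻¹ := by
  unfold hProf''
  rw [derivWithin_of_mem_nhds (Icc_mem_nhds hr.1 (by linarith [hr.2]))]
  have heq : derivWithin hProf (Set.Icc 0 1) =ᶠ[𝓝 r]
      (fun y => -2 * Real.cos (rhoInv y) / rhoInv y) := by
    filter_upwards [Ioo_mem_nhds hr.1 hr.2] with y hy
    exact derivWithin_hProf_eq (Set.mem_Ico.2 ⟨hy.1.le, hy.2⟩)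
  rw [heq.deriv_eq]
  exact (hasDerivAt_H hr).deriv

lemma continuousAt_K : ContinuousAt (fun φ : ℝ =>
    2 * (φ * Real.sin φ + Real.cos φ) / φ ^ 2 *
      ((φ * Real.cos φ - Real.sin φ) / φ ^ 2)⁻¹) π := by
  have hπ2 : (π : ℝ) ^ 2 ≠ 0 := by positivity
  have h1 : ContinuousAt (fun φ : ℝ => 2 * (φ * Real.sin φ + Real.cos φ) / φ ^ 2) π :=
    ContinuousAt.div (by fun_prop) (by fun_prop) hπ2
  have h2 : ContinuousAt (fun φ : ℝ => (φ * Real.cos φ - Real.sin φ) / φ ^ 2) π :=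
    ContinuousAt.div (by fun_prop) (by fun_prop) hπ2
  exact h1.mul (h2.inv₀ (ne_of_lt (rhoDeriv_neg Real.pi_pos le_rfl)))

lemma K_pi : 2 * (π * Real.sin π + Real.cos π) / π ^ 2 *
    ((π * Real.cos π - Real.sin π) / π ^ 2)⁻¹ = 2 / π := by
  rw [Real.sin_pi, Real.cos_pi]
  have hπ : (π : ℝ) ≠ 0 := Real.pi_ne_zero
  field_simp
  ring

lemma hasDerivWithinAt_H_zero :
    HasDerivWithinAt (fun y => -2 * Real.cos (rhoInv y) / rhoInv y) (2 / π) (Set.Icc 0 1) 0 := by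
  have h : HasDerivWithinAt (fun y => -2 * Real.cos (rhoInv y) / rhoInv y) (2 / π)
      (Set.Ici 0) 0 := by
    apply hasDerivWithinAt_Ici_of_tendsto_deriv (s := Set.Ioo 0 1)
    · intro r hr
      exact (hasDerivAt_H hr).differentiableAt.differentiableWithinAt
    · have hri : ContinuousWithinAt rhoInv (Set.Ioo 0 1) 0 :=
        continuousWithinAt_rhoInv_zero.mono (fun x hx => hx.1.le)
      have : ContinuousWithinAt ((fun φ : ℝ => -2 * Real.cos φ / φ) ∘ rhoInv)
          (Set.Ioo 0 1) 0 := by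
        apply ContinuousAt.comp_continuousWithinAt _ hri
        rw [rhoInv_zero]; exact continuousAt_negCosDiv
      exact this
    · exact Ioo_mem_nhdsGT_of_mem (Set.mem_Ico.2 ⟨le_refl (0:ℝ), one_pos⟩)
    · have heq : ∀ᶠ r in 𝓝[>] (0:ℝ),
          deriv (fun y => -2 * Real.cos (rhoInv y) / rhoInv y) r =
          (fun φ : ℝ => 2 * (φ * Real.sin φ + Real.cos φ) / φ ^ 2 *
            ((φ * Real.cos φ - Real.sin φ) / φ ^ 2)⁻¹) (rhoInv r) := by
        filter_upwards [Ioo_mem_nhdsGT_of_mem (Set.mem_Ico.2 ⟨le_refl (0:ℝ), one_pos⟩)]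
          with r hr
        exact (hasDerivAt_H hr).deriv
      rw [Filter.tendsto_congr' heq]
      have h2 := (continuousAt_K.tendsto).comp tendsto_rhoInv_zero
      rw [K_pi] at h2
      exact h2
  exact h.mono Set.Icc_subset_Ici_self

lemma hProf''_zero : hProf'' 0 = 2 / π := by
  have hG : HasDerivWithinAt (derivWithin hProf (Set.Icc 0 1)) (2 / π) (Set.Icc 0 1) 0 := by
    apply hasDerivWithinAt_H_zero.congr_of_eventuallyEq
    · filter_upwards [Filter.inter_mem self_mem_nhdsWithin
        (mem_nhdsWithin_of_mem_nhds (Iio_mem_nhds one_pos))] with y hy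
      exact derivWithin_hProf_eq ⟨hy.1.1, hy.2⟩
    · rw [derivWithin_hProf_eq (Set.mem_Ico.2 ⟨le_refl (0:ℝ), one_pos⟩)]
  exact hG.derivWithin ((uniqueDiffOn_Icc one_pos) 0 ⟨le_refl 0, zero_le_one⟩)

lemma strictAntiOn_F :
    StrictAntiOn (fun φ : ℝ => φ * Real.sin φ + Real.cos φ) (Set.Icc (π/2) π) := by
  apply strictAntiOn_of_deriv_neg (convex_Icc _ _) (by fun_prop)
  intro x hx
  rw [interior_Icc] at hx
  have hd : HasDerivAt (fun φ : ℝ => φ * Real.sin φ + Real.cos φ) (x * Real.cos x) x := by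
    have := ((hasDerivAt_id x).mul (Real.hasDerivAt_sin x)).add (Real.hasDerivAt_cos x)
    simp only [id_eq] at this
    refine this.congr_deriv (Eq.symm ?_)
    ring
  rw [hd.deriv]
  have hx0 : 0 < x := lt_trans (by positivity) hx.1
  exact mul_neg_of_pos_of_neg hx0
    (Real.cos_neg_of_pi_div_two_lt_of_lt hx.1 (by linarith [Real.pi_pos, hx.2]))

lemma exists_phic : ∃ φc ∈ Set.Ioo (π/2) π, φc * Real.sin φc + Real.cos φc = 0 := by
  have hle : π/2 ≤ π := by linarith [Real.pi_pos]
  have hcont : ContinuousOn (fun φ : ℝ => φ * Real.sin φ + Real.cos φ) (Set.Icc (π/2) π) := by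
    fun_prop
  have := intermediate_value_Ioo' hle hcont
  have h0 : (0:ℝ) ∈ Set.Ioo ((fun φ : ℝ => φ * Real.sin φ + Real.cos φ) π)
      ((fun φ : ℝ => φ * Real.sin φ + Real.cos φ) (π/2)) := by
    simp only [Real.sin_pi, Real.cos_pi, Real.sin_pi_div_two, Real.cos_pi_div_two]
    constructor <;> [linarith; (simp; positivity)]
  obtain ⟨φc, hφc, hφc0⟩ := this h0
  exact ⟨φc, hφc, hφc0⟩

lemma derivWithin_rho {φ : ℝ} (hφ : φ ∈ Set.Ioc (0:ℝ) π) :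
    derivWithin rhoProf (Set.Icc 0 π) φ = (φ * Real.cos φ - Real.sin φ) / φ ^ 2 :=
  (hasDerivAt_rho (ne_of_gt hφ.1)).hasDerivWithinAt.derivWithin
    ((uniqueDiffOn_Icc Real.pi_pos) φ ⟨hφ.1.le, hφ.2⟩)

/-- There is a unique `φ_c ∈ (π/2,π)` with `φ_c sin φ_c + cos φ_c = 0`; moreover for
`φ ∈ (0,π]`, `φ sin φ + cos φ > 0` iff `φ < φ_c`. Setting `r_c = ρ(φ_c) ∈ (0,2/π)`, one
has `h'' > 0` on `(0,r_c)`, `h''(r_c) = 0` and `h'' < 0` on `(r_c,1)`, with the explicit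
formula `h''(r) = 2 (φ sin φ + cos φ)/(φ² ρ'(φ))`, `φ = ρ⁻¹(r)`; and `r_c` is the unique
point of `(0,2/π)` with these sign properties. -/
theorem stmt7 :
    ∃ φc ∈ Set.Ioo (π / 2) π,
      φc * Real.sin φc + Real.cos φc = 0 ∧
      (∀ φ ∈ Set.Ioo (π / 2) π, φ * Real.sin φ + Real.cos φ = 0 → φ = φc) ∧
      (∀ φ ∈ Set.Ioc (0 : ℝ) π, (0 < φ * Real.sin φ + Real.cos φ ↔ φ < φc)) ∧
      rhoProf φc ∈ Set.Ioo 0 (2 / π) ∧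
      (∀ r ∈ Set.Ioo 0 (rhoProf φc), 0 < hProf'' r) ∧
      hProf'' (rhoProf φc) = 0 ∧
      (∀ r ∈ Set.Ioo (rhoProf φc) 1, hProf'' r < 0) ∧
      (∀ r ∈ Set.Ico (0 : ℝ) 1,
        hProf'' r = 2 * (rhoInv r * Real.sin (rhoInv r) + Real.cos (rhoInv r)) /
          ((rhoInv r) ^ 2 * derivWithin rhoProf (Set.Icc 0 π) (rhoInv r))) ∧
      (∀ rc ∈ Set.Ioo (0 : ℝ) (2 / π),
        ((∀ r ∈ Set.Ioo 0 rc, 0 < hProf'' r) ∧ hProf'' rc = 0 ∧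
          (∀ r ∈ Set.Ioo rc 1, hProf'' r < 0)) → rc = rhoProf φc) := by
  obtain ⟨φc, hφc, hFφc⟩ := exists_phic
  have hπ : (0:ℝ) < π := Real.pi_pos
  have hφc0 : 0 < φc := lt_trans (by positivity) hφc.1
  have hφcIcc : φc ∈ Set.Icc (π/2) π := ⟨hφc.1.le, hφc.2.le⟩
  have hφcIcc' : φc ∈ Set.Icc (0:ℝ) π := ⟨hφc0.le, hφc.2.le⟩
  have hsign : ∀ φ ∈ Set.Ioc (0:ℝ) π, (0 < φ * Real.sin φ + Real.cos φ ↔ φ < φc) := by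
    intro φ hφ
    rcases le_or_gt φ (π/2) with h | h
    · have hF : 0 < φ * Real.sin φ + Real.cos φ := by
        have hs : 0 < Real.sin φ := Real.sin_pos_of_pos_of_lt_pi hφ.1 (by linarith)
        have hc : 0 ≤ Real.cos φ := Real.cos_nonneg_of_mem_Icc ⟨by linarith [hφ.1], h⟩
        nlinarith [hφ.1]
      exact ⟨fun _ => lt_of_le_of_lt h hφc.1, fun _ => hF⟩
    · have hφIcc : φ ∈ Set.Icc (π/2) π := ⟨h.le, hφ.2⟩
      constructor
      · intro hF
        by_contra hge
        push_neg at hge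
        have := strictAntiOn_F.antitoneOn hφcIcc hφIcc hge
        rw [hFφc] at this
        exact absurd hF (not_lt.2 this)
      · intro hlt
        have := strictAntiOn_F hφIcc hφcIcc hlt
        simp only [] at this
        rwa [hFφc] at this
  have huniq : ∀ φ ∈ Set.Ioo (π/2) π, φ * Real.sin φ + Real.cos φ = 0 → φ = φc := by
    intro φ hφ hF
    exact strictAntiOn_F.injOn ⟨hφ.1.le, hφ.2.le⟩ hφcIcc (by rw [hF, hFφc])
  set rc := rhoProf φc with hrc
  have hsinφc : 0 < Real.sin φc := Real.sin_pos_of_pos_of_lt_pi hφc0 hφc.2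
  have hrc_pos : 0 < rc := by
    rw [hrc, rhoProf, if_neg (ne_of_gt hφc0)]
    positivity
  have hrc_lt : rc < 2/π := by
    have h1 := strictAntiOn_rho ⟨by positivity, by linarith⟩ hφcIcc' hφc.1
    have h2 : rhoProf (π/2) = 2/π := by
      rw [rhoProf, if_neg (by positivity : (π/2:ℝ) ≠ 0), Real.sin_pi_div_two]
      rw [eq_div_iff (ne_of_gt hπ)]
      field_simp
    rw [h2] at h1
    exact h1
  have hrc1 : rc < 1 := lt_trans hrc_lt (by rw [div_lt_one hπ]; linarith [Real.pi_gt_three])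
  have hrcIoo : rc ∈ Set.Ioo (0:ℝ) 1 := ⟨hrc_pos, hrc1⟩
  have hrcInv : rhoInv rc = φc := rhoInv_rho hφcIcc'
  have hord : ∀ r ∈ Set.Ioo (0:ℝ) 1, (r < rc ↔ φc < rhoInv r) := by
    intro r hr
    constructor
    · intro h
      have := strictAntiOn_rhoInv (Set.mem_Icc_of_Ioo hr) (Set.mem_Icc_of_Ioo hrcIoo) h
      rwa [hrcInv] at this
    · intro h
      have := strictAntiOn_rho hφcIcc' (rhoInv_mem (Set.mem_Icc_of_Ioo hr)) h
      rwa [rho_rhoInv (Set.mem_Icc_of_Ioo hr)] at this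
  have heqord : ∀ r ∈ Set.Ioo (0:ℝ) 1, (r = rc ↔ rhoInv r = φc) := by
    intro r hr
    constructor
    · intro h; rw [h, hrcInv]
    · intro h
      have := rho_rhoInv (Set.mem_Icc_of_Ioo hr)
      rw [h] at this
      rw [← this]
  -- sign of hProf''
  have hinv_neg : ∀ r ∈ Set.Ioo (0:ℝ) 1,
      ((rhoInv r * Real.cos (rhoInv r) - Real.sin (rhoInv r)) / (rhoInv r) ^ 2)⁻¹ < 0 := by
    intro r hr
    have hm := rhoInv_mem_Ioo hr
    exact inv_lt_zero.2 (rhoDeriv_neg hm.1 hm.2.le)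
  have hpos : ∀ r ∈ Set.Ioo (0:ℝ) rc, 0 < hProf'' r := by
    intro r hr
    have hr1 : r ∈ Set.Ioo (0:ℝ) 1 := ⟨hr.1, lt_trans hr.2 hrc1⟩
    have hm := rhoInv_mem_Ioo hr1
    have hφgt : φc < rhoInv r := (hord r hr1).1 hr.2
    have hFneg : rhoInv r * Real.sin (rhoInv r) + Real.cos (rhoInv r) < 0 := by
      have := strictAntiOn_F hφcIcc ⟨by linarith [hφc.1], hm.2.le⟩ hφgt
      simp only [] at this
      rwa [hFφc] at this
    rw [hProf''_eq_Ioo hr1]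
    apply mul_pos_of_neg_of_neg
    · exact div_neg_of_neg_of_pos (by linarith) (pow_pos hm.1 2)
    · exact hinv_neg r hr1
  have hzero : hProf'' rc = 0 := by
    rw [hProf''_eq_Ioo hrcIoo, hrcInv, hFφc]
    simp
  have hneg : ∀ r ∈ Set.Ioo rc 1, hProf'' r < 0 := by
    intro r hr
    have hr1 : r ∈ Set.Ioo (0:ℝ) 1 := ⟨lt_trans hrc_pos hr.1, hr.2⟩
    have hm := rhoInv_mem_Ioo hr1
    have hφlt : rhoInv r < φc := by
      rcases lt_trichotomy (rhoInv r) φc with h | h | h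
      · exact h
      · exact absurd ((heqord r hr1).2 h) (ne_of_gt hr.1)
      · exact absurd ((hord r hr1).2 h) (not_lt.2 hr.1.le)
    have hFpos : 0 < rhoInv r * Real.sin (rhoInv r) + Real.cos (rhoInv r) :=
      (hsign (rhoInv r) ⟨hm.1, hm.2.le⟩).2 hφlt
    rw [hProf''_eq_Ioo hr1]
    apply mul_neg_of_pos_of_neg
    · exact div_pos (by linarith) (pow_pos hm.1 2)
    · exact hinv_neg r hr1
  refine ⟨φc, hφc, hFφc, huniq, hsign, ⟨hrc_pos, hrc_lt⟩, hpos, hzero, hneg, ?_, ?_⟩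
  · -- formula
    intro r hr
    rcases eq_or_ne r 0 with rfl | hr0
    · rw [hProf''_zero, rhoInv_zero, derivWithin_rho ⟨hπ, le_refl π⟩,
        Real.sin_pi, Real.cos_pi]
      have hne : (π:ℝ) ≠ 0 := Real.pi_ne_zero
      field_simp
      ring
    · have hr1 : r ∈ Set.Ioo (0:ℝ) 1 := ⟨lt_of_le_of_ne hr.1 (Ne.symm hr0), hr.2⟩
      have hm := rhoInv_mem_Ioo hr1
      rw [hProf''_eq_Ioo hr1, derivWithin_rho ⟨hm.1, hm.2.le⟩]
      have h1 : (rhoInv r) ^ 2 ≠ 0 := ne_of_gt (pow_pos hm.1 2)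
      have h2 : (rhoInv r * Real.cos (rhoInv r) - Real.sin (rhoInv r)) / (rhoInv r) ^ 2 ≠ 0 :=
        ne_of_lt (rhoDeriv_neg hm.1 hm.2.le)
      have h3 : rhoInv r * Real.cos (rhoInv r) - Real.sin (rhoInv r) ≠ 0 := by
        intro hc
        apply h2
        rw [hc, zero_div]
      field_simp
  · -- uniqueness of rc
    intro rc' hrc' hprops
    obtain ⟨hpos', hzero', hneg'⟩ := hprops
    rcases lt_trichotomy rc' rc with h | h | h
    · exact absurd hzero' (ne_of_gt (hpos rc' ⟨hrc'.1, h⟩))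
    · exact h
    · exact absurd hzero (ne_of_gt (hpos' rc ⟨hrc_pos, h⟩))
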